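/- Suppose g : E → ℝ → E satisfies the one-sided Lipschitz condition with rate γ̄ : ℝ → ℝ (with respect to ‖·‖_P) on [0, ∞), with γ̄(t) > 0 for all t ≥ 0. Let h > 0, let x* : ℝ → E satisfy g (x* t) t = 0 for all t ≥ 0, and let y : ℕ → E satisfy the implicit Euler recursion y (k+1) = y k + h • g (y (k+1)) ((k+1)·h) for all k. Then for every k ≥ 1, ‖y k − x* (k·h)‖_P ≤ (∏_{m=1}^{k} (1 + h·γ̄(m·h))⁻¹) · ‖y 0 − x* 0‖_P + ∑_{m=1}^{k} (∏_{r=m}^{k} (1 + h·γ̄(r·h))⁻¹) · ‖x* (m·h) − x* ((m−1)·h)‖_P. -/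

import Mathlib

open Finset

/-- Weighted inner product `⟪u, P.mulVec v⟫` on Euclidean space. -/
noncomputable def wip {n : ℕ} (P : Matrix (Fin n) (Fin n) ℝ)
    (u v : EuclideanSpace ℝ (Fin n)) : ℝ :=
  ∑ i, u i * P.mulVec (fun j => v j) i

/-- Weighted norm `‖u‖_P = √⟪u, u⟫_P`. -/
noncomputable def wnorm {n : ℕ} (P : Matrix (Fin n) (Fin n) ℝ)
    (u : EuclideanSpace ℝ (Fin n)) : ℝ :=
  Real.sqrt (wip P u u)

section Aux
variable {n : ℕ} {P : Matrix (Fin n) (Fin n) ℝ}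

lemma wip_add_right' (u v w : EuclideanSpace ℝ (Fin n)) :
    wip P u (v + w) = wip P u v + wip P u w := by
  simp only [wip]
  rw [show (fun j => (v + w) j) = ((fun j => v j) + (fun j => w j)) from rfl,
    Matrix.mulVec_add]
  simp [mul_add, Finset.sum_add_distrib]

lemma wip_smul_right' (u v : EuclideanSpace ℝ (Fin n)) (r : ℝ) :
    wip P u (r • v) = r * wip P u v := by
  simp only [wip]
  rw [show (fun j => (r • v) j) = (r • fun j => v j) from rfl, Matrix.mulVec_smul]
  rw [Finset.mul_sum]
  apply Finset.sum_congr rfl; intros; simp [Pi.smul_apply]; ring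

lemma wip_comm' (hPsymm : P.IsSymm) (u v : EuclideanSpace ℝ (Fin n)) :
    wip P u v = wip P v u := by
  simp only [wip, Matrix.mulVec, dotProduct, Finset.mul_sum]
  rw [Finset.sum_comm]
  apply Finset.sum_congr rfl; intro i _
  apply Finset.sum_congr rfl; intro j _
  rw [hPsymm.apply i j]; ring

lemma wip_smul_left' (hPsymm : P.IsSymm) (u v : EuclideanSpace ℝ (Fin n)) (r : ℝ) :
    wip P (r • u) v = r * wip P u v := by
  rw [wip_comm' hPsymm, wip_smul_right', wip_comm' hPsymm]

lemma wip_nonneg' (hP : P.PosDef) (u : EuclideanSpace ℝ (Fin n)) : 0 ≤ wip P u u := by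
  by_cases hu : (fun j => u j) = (0 : Fin n → ℝ)
  · have : ∀ i, u i = 0 := fun i => congrFun hu i
    simp [wip, this]
  · have h2 := hP.dotProduct_mulVec_pos (x := fun j => u j) hu
    simp only [star_trivial] at h2
    have heq : wip P u u = dotProduct (fun j => u j) (P.mulVec fun j => u j) := by
      simp [wip, dotProduct]
    rw [heq]
    exact h2.le

lemma wnorm_nonneg' (u : EuclideanSpace ℝ (Fin n)) : 0 ≤ wnorm P u :=
  Real.sqrt_nonneg _

lemma sq_wnorm' (hP : P.PosDef) (u : EuclideanSpace ℝ (Fin n)) :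
    (wnorm P u) ^ 2 = wip P u u :=
  Real.sq_sqrt (wip_nonneg' hP u)

lemma wip_expand' (hPsymm : P.IsSymm) (x y : EuclideanSpace ℝ (Fin n)) (t : ℝ) :
    wip P (x + t • y) (x + t • y) =
      wip P x x + 2 * t * wip P x y + t ^ 2 * wip P y y := by
  rw [wip_add_right', wip_smul_right', wip_comm' hPsymm _ x, wip_comm' hPsymm _ y,
    wip_add_right', wip_add_right', wip_smul_right', wip_smul_right',
    wip_comm' hPsymm y x]
  ring

lemma wip_cs' (hPsymm : P.IsSymm) (hP : P.PosDef) (u v : EuclideanSpace ℝ (Fin n)) :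
    wip P u v ≤ wnorm P u * wnorm P v := by
  have hu2 := sq_wnorm' hP u
  have hv2 := sq_wnorm' hP v
  have hun := wnorm_nonneg' (P := P) u
  have hvn := wnorm_nonneg' (P := P) v
  by_cases hv : (fun j => v j) = (0 : Fin n → ℝ)
  · have : wip P u v = 0 := by
      simp only [wip]
      rw [hv, Matrix.mulVec_zero]
      simp
    rw [this]; positivity
  · have hs : 0 < wip P v v := by
      have h2 := hP.dotProduct_mulVec_pos (x := fun j => v j) hv
      simp only [star_trivial] at h2
      have heq : wip P v v = dotProduct (fun j => v j) (P.mulVec fun j => v j) := by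
        simp [wip, dotProduct]
      rw [heq]; exact h2
    have hq := wip_nonneg' hP ((wip P v v) • u + (-(wip P u v)) • v)
    rw [wip_expand' hPsymm, wip_smul_left' hPsymm, wip_smul_left' hPsymm,
      wip_smul_right' ] at hq
    have hineq : (wip P u v) ^ 2 ≤ wip P u u * wip P v v := by
      nlinarith [hq, hs]
    nlinarith [hineq, sq_nonneg (wnorm P u * wnorm P v - wip P u v),
      sq_nonneg (wnorm P u * wnorm P v + wip P u v), mul_nonneg hun hvn]

lemma wnorm_add_le' (hPsymm : P.IsSymm) (hP : P.PosDef) (u v : EuclideanSpace ℝ (Fin n)) :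
    wnorm P (u + v) ≤ wnorm P u + wnorm P v := by
  have hexp : wip P (u + v) (u + v) = wip P u u + 2 * wip P u v + wip P v v := by
    have := wip_expand' hPsymm u v 1
    simpa using this
  have hcs := wip_cs' hPsymm hP u v
  have hu2 := sq_wnorm' hP u
  have hv2 := sq_wnorm' hP v
  have hun := wnorm_nonneg' (P := P) u
  have hvn := wnorm_nonneg' (P := P) v
  have hle : wip P (u + v) (u + v) ≤ (wnorm P u + wnorm P v) ^ 2 := by
    rw [hexp]; nlinarith
  calc wnorm P (u + v) = Real.sqrt (wip P (u + v) (u + v)) := rfl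
    _ ≤ Real.sqrt ((wnorm P u + wnorm P v) ^ 2) := Real.sqrt_le_sqrt hle
    _ = wnorm P u + wnorm P v := Real.sqrt_sq (by linarith)

lemma wnorm_sub_le' (hPsymm : P.IsSymm) (hP : P.PosDef) (u v : EuclideanSpace ℝ (Fin n)) :
    wnorm P (u - v) ≤ wnorm P u + wnorm P v := by
  have hneg : wnorm P (-v) = wnorm P v := by
    have : wip P (-v) (-v) = wip P v v := by
      rw [show (-v : EuclideanSpace ℝ (Fin n)) = (-1 : ℝ) • v by simp,
        wip_smul_right', wip_comm' hPsymm, wip_smul_right', wip_comm' hPsymm]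
      ring
    simp [wnorm, this]
  have := wnorm_add_le' hPsymm hP u (-v)
  rw [hneg] at this
  simpa [sub_eq_add_neg] using this

/-- Discrete Gronwall-type recursion bound. -/
lemma rec_bound' (A B c : ℕ → ℝ) (hc : ∀ m, 0 ≤ c m)
    (hstep : ∀ k : ℕ, A (k + 1) ≤ c (k + 1) * (A k + B (k + 1))) :
    ∀ k : ℕ, 1 ≤ k → A k ≤ (∏ m ∈ Finset.Icc 1 k, c m) * A 0 +
      ∑ m ∈ Finset.Icc 1 k, (∏ r ∈ Finset.Icc m k, c r) * B m := by
  intro k hk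
  induction k, hk using Nat.le_induction with
  | base =>
    have := hstep 0
    simp only [Finset.Icc_self, Finset.prod_singleton, Finset.sum_singleton]
    calc A 1 ≤ c 1 * (A 0 + B 1) := by simpa using this
      _ = c 1 * A 0 + c 1 * B 1 := by ring
  | succ k hk1 IH =>
    have hsum : ∑ m ∈ Finset.Icc 1 (k + 1), (∏ r ∈ Finset.Icc m (k + 1), c r) * B m =
        c (k + 1) * (∑ m ∈ Finset.Icc 1 k, (∏ r ∈ Finset.Icc m k, c r) * B m) +
          c (k + 1) * B (k + 1) := by
      rw [Finset.sum_Icc_succ_top (by omega : 1 ≤ k + 1)]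
      rw [Finset.Icc_self, Finset.prod_singleton, Finset.mul_sum]
      congr 1
      apply Finset.sum_congr rfl
      intro m hm
      rw [Finset.prod_Icc_succ_top (Nat.le_succ_of_le (Finset.mem_Icc.mp hm).2)]
      ring
    have hprod : ∏ m ∈ Finset.Icc 1 (k + 1), c m = (∏ m ∈ Finset.Icc 1 k, c m) * c (k + 1) :=
      Finset.prod_Icc_succ_top (by omega) c
    calc A (k + 1) ≤ c (k + 1) * (A k + B (k + 1)) := hstep k
      _ ≤ c (k + 1) * ((∏ m ∈ Finset.Icc 1 k, c m) * A 0 +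
          ∑ m ∈ Finset.Icc 1 k, (∏ r ∈ Finset.Icc m k, c r) * B m + B (k + 1)) := by
          apply mul_le_mul_of_nonneg_left _ (hc (k + 1))
          linarith [IH]
      _ = (∏ m ∈ Finset.Icc 1 (k + 1), c m) * A 0 +
          ∑ m ∈ Finset.Icc 1 (k + 1), (∏ r ∈ Finset.Icc m (k + 1), c r) * B m := by
          rw [hprod, hsum]; ring

end Aux

theorem stmt_4 {n : ℕ} (P : Matrix (Fin n) (Fin n) ℝ)
    (hPsymm : P.IsSymm) (hPpos : P.PosDef)
    (g : EuclideanSpace ℝ (Fin n) → ℝ → EuclideanSpace ℝ (Fin n))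
    (gam : ℝ → ℝ)
    (hOSL : ∀ x y : EuclideanSpace ℝ (Fin n), ∀ t : ℝ, 0 ≤ t →
      wip P (x - y) (g x t - g y t) ≤ -gam t * (wnorm P (x - y)) ^ 2)
    (hgam : ∀ t : ℝ, 0 ≤ t → 0 < gam t)
    (h : ℝ) (hh : 0 < h)
    (xs : ℝ → EuclideanSpace ℝ (Fin n)) (hxs : ∀ t : ℝ, 0 ≤ t → g (xs t) t = 0)
    (y : ℕ → EuclideanSpace ℝ (Fin n))
    (hy : ∀ k : ℕ, y (k + 1) = y k + h • g (y (k + 1)) (((k : ℝ) + 1) * h)) :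
    ∀ k : ℕ, 1 ≤ k →
      wnorm P (y k - xs ((k : ℝ) * h)) ≤
        (∏ m ∈ Finset.Icc 1 k, (1 + h * gam ((m : ℝ) * h))⁻¹) * wnorm P (y 0 - xs 0) +
        ∑ m ∈ Finset.Icc 1 k,
          (∏ r ∈ Finset.Icc m k, (1 + h * gam ((r : ℝ) * h))⁻¹) *
            wnorm P (xs ((m : ℝ) * h) - xs (((m : ℝ) - 1) * h)) := by
  have hc : ∀ m : ℕ, 0 < 1 + h * gam ((m : ℝ) * h) := by
    intro m
    have := hgam ((m : ℝ) * h) (by positivity)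
    nlinarith
  -- one-step estimate
  have step : ∀ k : ℕ,
      (1 + h * gam (((k : ℝ) + 1) * h)) * wnorm P (y (k + 1) - xs (((k : ℝ) + 1) * h)) ≤
        wnorm P (y k - xs (((k : ℝ) + 1) * h)) := by
    intro k
    set t : ℝ := ((k : ℝ) + 1) * h with ht
    have ht0 : 0 ≤ t := by positivity
    set e : EuclideanSpace ℝ (Fin n) := y (k + 1) - xs t with he
    set a : EuclideanSpace ℝ (Fin n) := y k - xs t with ha
    set w : EuclideanSpace ℝ (Fin n) := g (y (k + 1)) t - g (xs t) t with hw
    have hdec : e = a + h • w := by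
      rw [he, ha, hw, hxs t ht0, sub_zero]
      nth_rewrite 1 [hy k]
      abel
    have hsplit : wip P e e = wip P e a + h * wip P e w := by
      conv_lhs => rw [hdec, wip_add_right', wip_smul_right', ← hdec]
    have hosl : wip P e w ≤ -gam t * (wnorm P e) ^ 2 := by
      have := hOSL (y (k + 1)) (xs t) t ht0
      rw [← he, ← hw] at this
      exact this
    have hcs : wip P e a ≤ wnorm P e * wnorm P a := wip_cs' hPsymm hPpos e a
    have hsq : (wnorm P e) ^ 2 = wip P e e := sq_wnorm' hPpos e
    have key : (1 + h * gam t) * (wnorm P e) ^ 2 ≤ wnorm P e * wnorm P a := by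
      nlinarith [hsplit, hosl, hcs, hsq, hh]
    rcases eq_or_lt_of_le (wnorm_nonneg' (P := P) e) with h0 | h0
    · rw [← h0]
      have := wnorm_nonneg' (P := P) a
      nlinarith
    · have hne : wnorm P e ≠ 0 := ne_of_gt h0
      calc (1 + h * gam t) * wnorm P e
          = (wnorm P e)⁻¹ * ((1 + h * gam t) * (wnorm P e) ^ 2) := by
            field_simp
        _ ≤ (wnorm P e)⁻¹ * (wnorm P e * wnorm P a) :=
            mul_le_mul_of_nonneg_left key (le_of_lt (inv_pos.mpr h0))
        _ = wnorm P a := by field_simp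
  -- recursion setup
  have hstep2 : ∀ k : ℕ,
      (fun k : ℕ => wnorm P (y k - xs ((k : ℝ) * h))) (k + 1) ≤
        (fun m : ℕ => (1 + h * gam ((m : ℝ) * h))⁻¹) (k + 1) *
          ((fun k : ℕ => wnorm P (y k - xs ((k : ℝ) * h))) k +
            (fun m : ℕ => wnorm P (xs ((m : ℝ) * h) - xs (((m : ℝ) - 1) * h))) (k + 1)) := by
    intro k
    simp only
    have hcast1 : ((k + 1 : ℕ) : ℝ) = (k : ℝ) + 1 := by push_cast; ring
    have hcast2 : ((k + 1 : ℕ) : ℝ) - 1 = (k : ℝ) := by push_cast; ring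
    rw [hcast2, hcast1]
    have htri : wnorm P (y k - xs (((k : ℝ) + 1) * h)) ≤
        wnorm P (y k - xs ((k : ℝ) * h)) +
          wnorm P (xs (((k : ℝ) + 1) * h) - xs ((k : ℝ) * h)) := by
      have heq : y k - xs (((k : ℝ) + 1) * h) =
          (y k - xs ((k : ℝ) * h)) - (xs (((k : ℝ) + 1) * h) - xs ((k : ℝ) * h)) := by abel
      rw [heq]
      exact wnorm_sub_le' hPsymm hPpos _ _
    have hs := step k
    have hpos := hc (k + 1)
    rw [hcast1] at hpos
    have hne : (1 + h * gam (((k : ℝ) + 1) * h)) ≠ 0 := ne_of_gt hpos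
    calc wnorm P (y (k + 1) - xs (((k : ℝ) + 1) * h))
        = (1 + h * gam (((k : ℝ) + 1) * h))⁻¹ *
            ((1 + h * gam (((k : ℝ) + 1) * h)) *
              wnorm P (y (k + 1) - xs (((k : ℝ) + 1) * h))) := by
          field_simp
      _ ≤ (1 + h * gam (((k : ℝ) + 1) * h))⁻¹ *
            (wnorm P (y k - xs ((k : ℝ) * h)) +
              wnorm P (xs (((k : ℝ) + 1) * h) - xs ((k : ℝ) * h))) :=
          mul_le_mul_of_nonneg_left (le_trans hs htri) (le_of_lt (inv_pos.mpr hpos))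
  intro k hk
  have := rec_bound' (fun k : ℕ => wnorm P (y k - xs ((k : ℝ) * h)))
    (fun m : ℕ => wnorm P (xs ((m : ℝ) * h) - xs (((m : ℝ) - 1) * h)))
    (fun m : ℕ => (1 + h * gam ((m : ℝ) * h))⁻¹)
    (fun m => le_of_lt (inv_pos.mpr (hc m))) hstep2 k hk
  simpa using this
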